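/- arXiv:1501.03895 — 2 statements merged into one kernel-verified Lean document; each statement's English description precedes it below -/
import Mathlib

section
/- Let Σ be a graded alphabet and t a tree in T_Σ. The equivalence relation ∼_h (defined on the states of the subtree automaton A_t by r_1 ∼_h r_2 iff h(r_1) = h(r_2)) is down compatible with A_t: r_1 ∼_h r_2 implies L_{r_1}(A_t) = L_{r_2}(A_t). Moreover, for every state r of A_t, L_r(A_t) = {h(r)}. -/
/-- A tree over a graded alphabet `σ` with arity function `ar`. -/
inductive GTree (σ : Type) (ar : σ → ℕ) : Type
  | node (f : σ) (ts : Fin (ar f) → GTree σ ar) : GTree σ ar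

/-- A root-weighted tree automaton (RWTA) over the graded alphabet `σ`
with weights in `M`. -/
structure RWTA (σ : Type) (ar : σ → ℕ) (M : Type) where
  Q : Type
  fin : Finite Q := by infer_instance
  ν : Q → M
  δ : ∀ f : σ, (Fin (ar f) → Q) → Q → Prop

attribute [instance] RWTA.fin

variable {σ : Type} {ar : σ → ℕ} {M : Type}

/-- The reachability map `Δ_A`. -/
def RWTA.Delta (A : RWTA σ ar M) : GTree σ ar → Set A.Q
  | .node f ts => {q | ∃ qs : Fin (ar f) → A.Q,
      (∀ i, qs i ∈ A.Delta (ts i)) ∧ A.δ f qs q}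

/-- The tree series realized by an RWTA: `P_A(t) = ν(Δ_A(t))`. -/
noncomputable def RWTA.P [AddCommMonoid M] (A : RWTA σ ar M) (t : GTree σ ar) : M :=
  ∑ᶠ q ∈ A.Delta t, A.ν q

/-- An RWTA is sequential when `Card (Δ_A(t)) ≤ 1` for every tree. -/
def RWTA.Sequential (A : RWTA σ ar M) : Prop :=
  ∀ t : GTree σ ar, (A.Delta t).Subsingleton

/-- The down language of a state. -/
def RWTA.DownLang (A : RWTA σ ar M) (q : A.Q) : Set (GTree σ ar) :=
  {t | q ∈ A.Delta t}

/-- The sequential RWTA associated with `A` by the subset construction. -/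
noncomputable def RWTA.subset [AddCommMonoid M] (A : RWTA σ ar M) : RWTA σ ar M where
  Q := Set A.Q
  ν := fun S => ∑ᶠ q ∈ S, A.ν q
  δ := fun f Qs S =>
    S = {q | ∃ qs : Fin (ar f) → A.Q, (∀ i, qs i ∈ Qs i) ∧ A.δ f qs q}

/-- The accessible part of an RWTA. -/
def RWTA.acc (A : RWTA σ ar M) : RWTA σ ar M where
  Q := {q : A.Q // (A.DownLang q).Nonempty}
  ν := fun q => A.ν q.1
  δ := fun f qs q => A.δ f (fun i => (qs i).1) q.1

/-- The sum of two RWTAs (on the disjoint union of the state sets). -/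
def RWTA.sum (A₁ A₂ : RWTA σ ar M) : RWTA σ ar M where
  Q := A₁.Q ⊕ A₂.Q
  ν := Sum.elim A₁.ν A₂.ν
  δ := fun f qs q =>
    (∃ (qs' : Fin (ar f) → A₁.Q) (q' : A₁.Q),
        q = Sum.inl q' ∧ (∀ i, qs i = Sum.inl (qs' i)) ∧ A₁.δ f qs' q') ∨
    (∃ (qs' : Fin (ar f) → A₂.Q) (q' : A₂.Q),
        q = Sum.inr q' ∧ (∀ i, qs i = Sum.inr (qs' i)) ∧ A₂.δ f qs' q')

/-- The product of two RWTAs. -/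
def RWTA.prod [Mul M] (A₁ A₂ : RWTA σ ar M) : RWTA σ ar M where
  Q := A₁.Q × A₂.Q
  ν := fun q => A₁.ν q.1 * A₂.ν q.2
  δ := fun f qs q =>
    A₁.δ f (fun i => (qs i).1) q.1 ∧ A₂.δ f (fun i => (qs i).2) q.2

/-- The quotient of an RWTA by an equivalence relation on its states. -/
noncomputable def RWTA.quot [AddCommMonoid M] (A : RWTA σ ar M) (s : Setoid A.Q) :
    RWTA σ ar M where
  Q := Quotient s
  ν := fun C => ∑ᶠ q ∈ {q : A.Q | Quotient.mk s q = C}, A.ν q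
  δ := fun f Cs C => ∃ (qs : Fin (ar f) → A.Q) (q : A.Q),
    (∀ i, Quotient.mk s (qs i) = Cs i) ∧ Quotient.mk s q = C ∧ A.δ f qs q

/-- Relabelling of trees along a rank-preserving map of symbols. -/
def GTree.map {Γ : Type} {arΓ : Γ → ℕ} (g : σ → Γ) (hg : ∀ f, arΓ (g f) = ar f) :
    GTree σ ar → GTree Γ arΓ
  | .node f ts => .node (g f) (fun i => GTree.map g hg (ts (Fin.cast (hg f) i)))

/-- A morphism of RWTAs. -/
structure RWTA.Morphism {Γ : Type} {arΓ : Γ → ℕ}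
    (A₁ : RWTA σ ar M) (A₂ : RWTA Γ arΓ M) where
  stateMap : A₁.Q → A₂.Q
  symMap : σ → Γ
  symRank : ∀ f, arΓ (symMap f) = ar f
  transMap : ∀ (f : σ) (qs : Fin (ar f) → A₁.Q) (q : A₁.Q), A₁.δ f qs q →
    A₂.δ (symMap f) (fun i => stateMap (qs (Fin.cast (symRank f) i))) (stateMap q)
  weightMap : ∀ q, A₂.ν (stateMap q) = A₁.ν q

/-- Two RWTAs are isomorphic when there are mutually inverse morphisms between them. -/
def RWTA.Isomorphic {Γ : Type} {arΓ : Γ → ℕ}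
    (A₁ : RWTA σ ar M) (A₂ : RWTA Γ arΓ M) : Prop :=
  ∃ (μ : A₁.Morphism A₂) (μ' : A₂.Morphism A₁),
    (∀ q, μ'.stateMap (μ.stateMap q) = q) ∧ (∀ q, μ.stateMap (μ'.stateMap q) = q) ∧
    (∀ f, μ'.symMap (μ.symMap f) = f) ∧ (∀ f, μ.symMap (μ'.symMap f) = f)

/-- The size (number of nodes) of a tree. -/
def GTree.size : GTree σ ar → ℕ
  | .node _ ts => 1 + ∑ i, (ts i).size

/-- The set of subtrees of a tree. -/
def GTree.subTrees : GTree σ ar → Set (GTree σ ar)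
  | .node f ts => insert (.node f ts) (⋃ i, (ts i).subTrees)

theorem GTree.subTrees_finite (t : GTree σ ar) : t.subTrees.Finite := by
  induction t with
  | node f ts ih => exact Set.Finite.insert _ (Set.finite_iUnion fun i => ih i)

-- `t.subCount s` is the number of occurrences of `s` as a subtree of `t`,
-- i.e. `SubTreeSeries_t(s)`.
open Classical in
noncomputable def GTree.subCount : GTree σ ar → GTree σ ar → ℕ
  | .node f ts, s =>
      (if GTree.node f ts = s then 1 else 0) + ∑ i, (ts i).subCount s

/-- Indexing of the symbols of a tree by their position in a prefix traversal
(auxiliary function, threading the position of the root). -/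
def GTree.sharpAux : GTree σ ar → ℕ → GTree (σ × ℕ) (fun p => ar p.1)
  | .node f ts, n => .node (f, n) (fun i =>
      (ts i).sharpAux (n + 1 + ∑ j : Fin (ar f), if j.1 < i.1 then (ts j).size else 0))

/-- `t^♯`: the tree `t` with each symbol indexed by its prefix-traversal position. -/
def GTree.sharp (t : GTree σ ar) : GTree (σ × ℕ) (fun p => ar p.1) := t.sharpAux 0

/-- The map `h` dropping the indexes. -/
def GTree.unsharp : GTree (σ × ℕ) (fun p => ar p.1) → GTree σ ar :=
  GTree.map Prod.fst (fun _ => rfl)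

/-- The subtree automaton `A_t` associated with a tree `t`. -/
def subtreeAut (t : GTree σ ar) : RWTA σ ar ℕ where
  Q := {r // r ∈ t.sharp.subTrees}
  fin := (t.sharp.subTrees_finite).to_subtype
  ν := fun _ => 1
  δ := fun f qs q => ∃ n : ℕ,
    (q : GTree (σ × ℕ) (fun p => ar p.1)) = .node (f, n) (fun i => (qs i : GTree (σ × ℕ) (fun p => ar p.1)))

/-- The equivalence `∼_h` on the states of the subtree automaton. -/
def simH (t : GTree σ ar) : Setoid (subtreeAut t).Q :=
  Setoid.ker (fun r => GTree.unsharp r.1)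

/-- The sequential subtree automaton `seq(A_t)` associated with a tree `t`. -/
noncomputable def seqSubtreeAut (t : GTree σ ar) : RWTA σ ar ℕ where
  Q := {r // r ∈ t.subTrees}
  fin := (t.subTrees_finite).to_subtype
  ν := fun r => t.subCount r.1
  δ := fun f qs q => (q : GTree σ ar) = .node f (fun i => (qs i : GTree σ ar))

/-- `SubTreeSet(L)`. -/
def subTreeSet (L : Set (GTree σ ar)) : Set (GTree σ ar) := ⋃ t ∈ L, t.subTrees

/-- `SubTreeSeries_L`. -/
noncomputable def subSeriesL (L : Set (GTree σ ar)) (s : GTree σ ar) : ℕ :=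
  ∑ᶠ t ∈ L, t.subCount s

/-- The sequential subtree automaton `A_L` associated with a finite tree language. -/
noncomputable def langSubtreeAut (L : Set (GTree σ ar)) (hL : L.Finite) : RWTA σ ar ℕ where
  Q := {r // r ∈ subTreeSet L}
  fin := (hL.biUnion fun t _ => t.subTrees_finite).to_subtype
  ν := fun r => subSeriesL L r.1
  δ := fun f qs q => (q : GTree σ ar) = .node f (fun i => (qs i : GTree σ ar))


lemma GTree.mem_subTrees_self (u : GTree σ ar) : u ∈ u.subTrees := by
  cases u with
  | node f ts => exact Set.mem_insert _ _

lemma GTree.child_mem_subTrees {u : GTree σ ar} {f : σ} {ts : Fin (ar f) → GTree σ ar}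
    (h : GTree.node f ts ∈ u.subTrees) (i : Fin (ar f)) : ts i ∈ u.subTrees := by
  induction u with
  | node g us ih =>
    rcases h with h | h
    · injection h with h1 h2
      subst h1
      have h2' := eq_of_heq h2
      subst h2'
      exact Set.mem_insert_iff.mpr (Or.inr (Set.mem_iUnion.mpr ⟨i, (ts i).mem_subTrees_self⟩))
    · rcases Set.mem_iUnion.mp h with ⟨j, hj⟩
      exact Set.mem_insert_iff.mpr (Or.inr (Set.mem_iUnion.mpr ⟨j, ih j hj⟩))

lemma GTree.unsharp_node {f : σ} {n : ℕ}
    (c : Fin (ar f) → GTree (σ × ℕ) (fun p => ar p.1)) :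
    GTree.unsharp (GTree.node (f, n) c) = GTree.node f (fun i => GTree.unsharp (c i)) :=
  rfl

lemma mem_delta_iff {σ : Type} {ar : σ → ℕ} (t : GTree σ ar)
    (r : (subtreeAut t).Q) (u : GTree σ ar) :
    u ∈ (subtreeAut t).DownLang r ↔ GTree.unsharp r.1 = u := by
  induction u generalizing r with
  | node f ts ih =>
    constructor
    · rintro ⟨qs, hqs, n, hq⟩
      have hch : ∀ i, GTree.unsharp (qs i).1 = ts i := fun i => (ih i (qs i)).mp (hqs i)
      rw [hq, GTree.unsharp_node]
      exact congrArg _ (funext hch)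
    · intro h
      obtain ⟨rt, hrt⟩ := r
      cases rt with
      | node p c =>
        obtain ⟨g, n⟩ := p
        rw [GTree.unsharp_node] at h
        injection h with h1 h2
        subst h1
        have h2' := eq_of_heq h2
        refine ⟨fun i => ⟨c i, GTree.child_mem_subTrees hrt i⟩, fun i => ?_, n, rfl⟩
        exact (ih i _).mpr (congrFun h2' i)

theorem simH_down_compatible {σ : Type} {ar : σ → ℕ} (t : GTree σ ar) :
    (∀ r₁ r₂ : (subtreeAut t).Q, GTree.unsharp r₁.1 = GTree.unsharp r₂.1 →
      (subtreeAut t).DownLang r₁ = (subtreeAut t).DownLang r₂) ∧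
    (∀ r : (subtreeAut t).Q, (subtreeAut t).DownLang r = {GTree.unsharp r.1}) := by
  have key : ∀ r : (subtreeAut t).Q, (subtreeAut t).DownLang r = {GTree.unsharp r.1} := by
    intro r
    ext u
    rw [Set.mem_singleton_iff, mem_delta_iff, eq_comm]
  exact ⟨fun r₁ r₂ h => by rw [key r₁, key r₂, h], key⟩
end

section
/- Let Σ be a graded alphabet and let L_1 and L_2 be two finite tree languages over Σ. Let (Σ,Q,ν,δ) be the accessible part of the product RWTA A_{L_1} × A_{L_2}. Then the subtree series kernel satisfies KerSeries(L_1,L_2) = ν(Q) = Σ_{q∈Q} ν(q). -/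
variable {σ : Type} {ar : σ → ℕ} {M : Type}

section Aux

variable {σ : Type} {ar : σ → ℕ}

lemma GTree.self_mem_subTrees (t : GTree σ ar) : t ∈ t.subTrees := by
  cases t with
  | node f ts => exact Set.mem_insert _ _

lemma GTree.child_mem_of_mem {u : GTree σ ar} :
    ∀ {f : σ} {ts : Fin (ar f) → GTree σ ar}, GTree.node f ts ∈ u.subTrees →
      ∀ i, ts i ∈ u.subTrees := by
  induction u with
  | node g us ih =>
    intro f ts h i
    rcases h with h | h
    · cases h
      exact Set.mem_insert_iff.2 (Or.inr (Set.mem_iUnion.2 ⟨i, GTree.self_mem_subTrees _⟩))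
    · rcases Set.mem_iUnion.1 h with ⟨j, hj⟩
      exact Set.mem_insert_iff.2 (Or.inr (Set.mem_iUnion.2 ⟨j, ih j hj i⟩))

lemma mem_subTreeSet_child {L : Set (GTree σ ar)} {f : σ} {ts : Fin (ar f) → GTree σ ar}
    (h : GTree.node f ts ∈ subTreeSet L) (i : Fin (ar f)) : ts i ∈ subTreeSet L := by
  rcases Set.mem_iUnion₂.1 h with ⟨u, hu, hmem⟩
  exact Set.mem_iUnion₂.2 ⟨u, hu, GTree.child_mem_of_mem hmem i⟩

lemma delta_lang {L : Set (GTree σ ar)} {hL : L.Finite} :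
    ∀ (t : GTree σ ar) (q : (langSubtreeAut L hL).Q),
      q ∈ (langSubtreeAut L hL).Delta t ↔ q.1 = t
  | .node f ts, q => by
    constructor
    · rintro ⟨qs, hqs, hδ⟩
      have h : ∀ i, (qs i).1 = ts i := fun i =>
        (delta_lang (ts i) (qs i)).1 (hqs i)
      have : (fun i => (qs i).1) = ts := funext h
      simpa [langSubtreeAut, this] using hδ
    · intro hq
      refine ⟨fun i => ⟨ts i, mem_subTreeSet_child (hq ▸ q.2) i⟩,
        fun i => (delta_lang (ts i) _).2 rfl, ?_⟩
      exact hq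

lemma delta_prod {M : Type} [Mul M] {A₁ A₂ : RWTA σ ar M} :
    ∀ (t : GTree σ ar) (q : (A₁.prod A₂).Q),
      q ∈ (A₁.prod A₂).Delta t ↔ q.1 ∈ A₁.Delta t ∧ q.2 ∈ A₂.Delta t
  | .node f ts, q => by
    constructor
    · rintro ⟨qs, hqs, h1, h2⟩
      exact ⟨⟨fun i => (qs i).1, fun i => ((delta_prod (ts i) (qs i)).1 (hqs i)).1, h1⟩,
             ⟨fun i => (qs i).2, fun i => ((delta_prod (ts i) (qs i)).1 (hqs i)).2, h2⟩⟩
    · rintro ⟨⟨qs1, hqs1, hq1⟩, ⟨qs2, hqs2, hq2⟩⟩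
      exact ⟨fun i => (qs1 i, qs2 i),
        fun i => (delta_prod (ts i) _).2 ⟨hqs1 i, hqs2 i⟩, hq1, hq2⟩

lemma subCount_eq_zero : ∀ {t s : GTree σ ar}, s ∉ t.subTrees → t.subCount s = 0
  | .node f ts, s, h => by
    simp only [GTree.subTrees, Set.mem_insert_iff, Set.mem_iUnion, not_or, not_exists] at h
    rw [GTree.subCount]
    rw [if_neg (fun e => h.1 e.symm), Finset.sum_eq_zero fun i _ => subCount_eq_zero (h.2 i)]
    rfl

lemma subSeriesL_eq_zero {L : Set (GTree σ ar)} {s : GTree σ ar}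
    (h : s ∉ subTreeSet L) : subSeriesL L s = 0 := by
  refine finsum_mem_of_eqOn_zero fun t ht => ?_
  exact subCount_eq_zero fun hs => h (Set.mem_iUnion₂.2 ⟨t, ht, hs⟩)

end Aux

theorem kernel_computation {σ : Type} {ar : σ → ℕ}
    (L₁ L₂ : Set (GTree σ ar)) (h₁ : L₁.Finite) (h₂ : L₂.Finite) :
    (∑ᶠ t : GTree σ ar, subSeriesL L₁ t * subSeriesL L₂ t) =
      ∑ᶠ q : (((langSubtreeAut L₁ h₁).prod (langSubtreeAut L₂ h₂)).acc).Q,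
        (((langSubtreeAut L₁ h₁).prod (langSubtreeAut L₂ h₂)).acc).ν q := by
  classical
  set A₁ := langSubtreeAut L₁ h₁ with hA₁
  set A₂ := langSubtreeAut L₂ h₂ with hA₂
  set F : GTree σ ar → ℕ := fun t => subSeriesL L₁ t * subSeriesL L₂ t with hF
  set S : Set (GTree σ ar) := subTreeSet L₁ ∩ subTreeSet L₂ with hS
  have hdl : ∀ q : (A₁.prod A₂).Q, ((A₁.prod A₂).DownLang q).Nonempty ↔ q.1.1 = q.2.1 := by
    intro q
    constructor
    · rintro ⟨t, ht⟩
      rcases (delta_prod t q).1 ht with ⟨hq1, hq2⟩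
      exact ((delta_lang t q.1).1 hq1).trans ((delta_lang t q.2).1 hq2).symm
    · intro h
      exact ⟨q.1.1, (delta_prod _ q).2
        ⟨(delta_lang _ _).2 rfl, (delta_lang _ _).2 h.symm⟩⟩
  let e : ((A₁.prod A₂).acc).Q → S := fun q =>
    ⟨q.1.1.1, q.1.1.2, ((hdl q.1).1 q.2) ▸ q.1.2.2⟩
  have he : Function.Bijective e := by
    constructor
    · intro q q' h
      have h'' := congrArg Subtype.val h
      have h' : q.1.1.1 = q'.1.1.1 := h''
      apply Subtype.ext; apply Prod.ext
      · exact Subtype.ext h'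
      · exact Subtype.ext (((hdl q.1).1 q.2).symm.trans (h'.trans ((hdl q'.1).1 q'.2)))
    · rintro ⟨t, ht1, ht2⟩
      exact ⟨⟨(⟨t, ht1⟩, ⟨t, ht2⟩), (hdl _).2 rfl⟩, Subtype.ext rfl⟩
  have hsup : Set.univ ∩ Function.support F = S ∩ Function.support F := by
    ext t
    simp only [Set.mem_inter_iff, Set.mem_univ, true_and, Function.mem_support, hF, hS]
    refine ⟨fun hne => ⟨⟨?_, ?_⟩, hne⟩, fun h => h.2⟩
    · by_contra hm
      exact hne (by rw [subSeriesL_eq_zero hm, zero_mul])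
    · by_contra hm
      exact hne (by rw [subSeriesL_eq_zero hm, mul_zero])
  calc (∑ᶠ t : GTree σ ar, F t)
      = ∑ᶠ t ∈ (Set.univ : Set (GTree σ ar)), F t := (finsum_mem_univ F).symm
    _ = ∑ᶠ t ∈ S, F t := finsum_mem_inter_support_eq F _ _ hsup
    _ = ∑ᶠ t : S, F t.1 := (finsum_set_coe_eq_finsum_mem S).symm
    _ = ∑ᶠ q : ((A₁.prod A₂).acc).Q, ((A₁.prod A₂).acc).ν q := by
        refine (finsum_eq_of_bijective e he fun q => ?_).symm
        show A₁.ν q.1.1 * A₂.ν q.1.2 = subSeriesL L₁ q.1.1.1 * subSeriesL L₂ q.1.1.1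
        have h := (hdl q.1).1 q.2
        show subSeriesL L₁ q.1.1.1 * subSeriesL L₂ q.1.2.1 = _
        rw [h]
end
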